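/- The SU(2) heat kernel at the identity satisfies the small-time asymptotic K_alpha(1) ~ sqrt(4 pi) * alpha^{-3/2} as alpha -> 0+, i.e., alpha^{3/2} * sum_{n=1}^{infty} n^2 e^{-alpha n^2/4} e^{alpha/4} -> sqrt(4 pi). -/

import Mathlib

open Filter
open Real

lemma sumNat {b : ℝ} (hb : b < 0) :
    Summable (fun n : ℕ => (n:ℝ)^2 * Real.exp (b*(n:ℝ)^2)) := by
  have hr : ‖Real.exp b‖ < 1 := by
    rw [Real.norm_eq_abs, abs_of_pos (Real.exp_pos _)]
    exact Real.exp_lt_one_iff.mpr hb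
  refine Summable.of_nonneg_of_le (fun n => by positivity) (fun n => ?_)
    (summable_pow_mul_geometric_of_norm_lt_one 2 hr)
  have h1 : Real.exp (b*(n:ℝ)^2) ≤ Real.exp b ^ n := by
    rw [← Real.exp_nat_mul]
    apply Real.exp_le_exp.2
    have hn : (n:ℝ) ≤ (n:ℝ)^2 := by
      have := (Nat.cast_le (α := ℝ)).2 (Nat.le_self_pow two_ne_zero n)
      push_cast at this; linarith
    nlinarith [mul_nonneg (neg_nonneg.2 hb.le) (sub_nonneg.2 hn)]
  calc (n:ℝ)^2 * Real.exp (b*(n:ℝ)^2) ≤ (n:ℝ)^2 * Real.exp b ^ n := by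
        apply mul_le_mul_of_nonneg_left h1 (by positivity)
    _ = (n:ℝ)^2 * Real.exp b ^ n := rfl

lemma sumNatExp {b : ℝ} (hb : b < 0) :
    Summable (fun n : ℕ => Real.exp (b*(n:ℝ)^2)) := by
  have hr : ‖Real.exp b‖ < 1 := by
    rw [Real.norm_eq_abs, abs_of_pos (Real.exp_pos _)]
    exact Real.exp_lt_one_iff.mpr hb
  refine Summable.of_nonneg_of_le (fun n => by positivity) (fun n => ?_)
    (summable_geometric_of_norm_lt_one hr)
  rw [← Real.exp_nat_mul]
  apply Real.exp_le_exp.2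
  have hn : (n:ℝ) ≤ (n:ℝ)^2 := by
    have := (Nat.cast_le (α := ℝ)).2 (Nat.le_self_pow two_ne_zero n)
    push_cast at this; linarith
  nlinarith [mul_nonneg (neg_nonneg.2 hb.le) (sub_nonneg.2 hn)]

lemma sumIntSq {b : ℝ} (hb : b < 0) :
    Summable (fun n : ℤ => (n:ℝ)^2 * Real.exp (b*(n:ℝ)^2)) := by
  apply Summable.of_nat_of_neg_add_one
  · exact (sumNat hb).congr (fun n => by push_cast; ring_nf)
  · refine (((summable_nat_add_iff 1).2 (sumNat hb))).congr (fun n => ?_)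
    push_cast; ring_nf

lemma sumIntExp {b : ℝ} (hb : b < 0) :
    Summable (fun n : ℤ => Real.exp (b*(n:ℝ)^2)) := by
  apply Summable.of_nat_of_neg_add_one
  · exact (sumNatExp hb).congr (fun n => by push_cast; ring_nf)
  · refine (((summable_nat_add_iff 1).2 (sumNatExp hb))).congr (fun n => ?_)
    push_cast; ring_nf

lemma aux_xexp {x : ℝ} (hx : 0 ≤ x) : x * Real.exp (-x) ≤ Real.exp (-x/2) := by
  have h2 : Real.exp (x/4) * Real.exp (x/4) = Real.exp (x/2) := by
    rw [← Real.exp_add]; ring_nf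
  have h3 := Real.add_one_le_exp (x/4)
  have h : x ≤ Real.exp (x/2) := by nlinarith [Real.exp_pos (x/4), sq_nonneg (1 - x/4)]
  calc x * Real.exp (-x) ≤ Real.exp (x/2) * Real.exp (-x) :=
        mul_le_mul_of_nonneg_right h (Real.exp_nonneg _)
    _ = Real.exp (-x/2) := by rw [← Real.exp_add]; ring_nf

lemma keyId {a : ℝ} (ha : 0 < a) :
    a ^ ((3:ℝ)/2) * ∑' n : ℤ, (n:ℝ)^2 * Real.exp (-π * a * (n:ℝ)^2)
      = 1/(2*π) * (∑' n : ℤ, Real.exp (-π/a * (n:ℝ)^2))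
        - (1/a) * ∑' n : ℤ, (n:ℝ)^2 * Real.exp (-π/a * (n:ℝ)^2) := by
  have hπ := Real.pi_pos
  have hb1 : -π * (a/2) < 0 := by nlinarith
  have hb2 : -π / (2*a) < 0 := div_neg_of_neg_of_pos (by linarith) (by linarith)
  -- derivative of P x = ∑' exp (-π x n²) at a
  have hP : HasDerivAt (fun x : ℝ => ∑' n : ℤ, Real.exp (-π * x * (n:ℝ)^2))
      (∑' n : ℤ, -(π * ((n:ℝ)^2 * Real.exp (-π * a * (n:ℝ)^2)))) a := by
    apply hasDerivAt_tsum_of_isPreconnected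
      (g := fun (n:ℤ) (x:ℝ) => Real.exp (-π * x * (n:ℝ)^2))
      (g' := fun (n:ℤ) (x:ℝ) => -(π * ((n:ℝ)^2 * Real.exp (-π * x * (n:ℝ)^2))))
      (u := fun n : ℤ => π * ((n:ℝ)^2 * Real.exp (-π * (a/2) * (n:ℝ)^2)))
      (((sumIntSq hb1).mul_left π)) isOpen_Ioi (isPreconnected_Ioi (a := a/2))
      (fun n x hx => ?_) (fun n x hx => ?_) (by simp [ha] : a ∈ Set.Ioi (a/2))
      ((sumIntExp (by nlinarith : -π * a < 0))) (by simp [ha] : a ∈ Set.Ioi (a/2))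
    · have h0 : HasDerivAt (fun x : ℝ => -π * x * (n:ℝ)^2) (-π * (n:ℝ)^2) x := by
        have he : (fun x : ℝ => -π * x * (n:ℝ)^2) = fun x => (-π * (n:ℝ)^2) * x := by
          funext y; ring
        rw [he]
        exact ((hasDerivAt_id x).const_mul (-π * (n:ℝ)^2)).congr_deriv (by ring)
      have := h0.exp
      exact this.congr_deriv (by ring)
    · rw [Real.norm_eq_abs, abs_neg, abs_of_nonneg (by positivity)]
      have hx' : a/2 ≤ x := le_of_lt hx
      have hexp : Real.exp (-π * x * (n:ℝ)^2) ≤ Real.exp (-π * (a/2) * (n:ℝ)^2) :=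
        Real.exp_le_exp.2 (by
          nlinarith [mul_nonneg (mul_nonneg hπ.le (sq_nonneg ((n:ℝ)))) (sub_nonneg.2 hx')])
      exact mul_le_mul_of_nonneg_left
        (mul_le_mul_of_nonneg_left hexp (sq_nonneg _)) hπ.le
  -- derivative of G x = ∑' exp (-π/x n²) at a
  have hG : HasDerivAt (fun x : ℝ => ∑' n : ℤ, Real.exp (-π / x * (n:ℝ)^2))
      (∑' n : ℤ, π/a^2 * ((n:ℝ)^2 * Real.exp (-π / a * (n:ℝ)^2))) a := by
    apply hasDerivAt_tsum_of_isPreconnected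
      (g := fun (n:ℤ) (x:ℝ) => Real.exp (-π / x * (n:ℝ)^2))
      (g' := fun (n:ℤ) (x:ℝ) => π/x^2 * ((n:ℝ)^2 * Real.exp (-π / x * (n:ℝ)^2)))
      (u := fun n : ℤ => π/(a/2)^2 * ((n:ℝ)^2 * Real.exp (-π / (2*a) * (n:ℝ)^2)))
      (((sumIntSq hb2).mul_left _)) isOpen_Ioo (isPreconnected_Ioo (a := a/2) (b := 2*a))
      (fun n x hx => ?_) (fun n x hx => ?_)
      (by constructor <;> nlinarith : a ∈ Set.Ioo (a/2) (2*a))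
      ((sumIntExp (div_neg_of_neg_of_pos (by linarith) ha : -π / a < 0)))
      (by constructor <;> nlinarith : a ∈ Set.Ioo (a/2) (2*a))
    · have hx0 : (0:ℝ) < x := lt_trans (by positivity) hx.1
      have h0 : HasDerivAt (fun x : ℝ => -π / x * (n:ℝ)^2) (π/x^2 * (n:ℝ)^2) x := by
        have he : (fun x : ℝ => -π / x * (n:ℝ)^2) = fun x => (-π * (n:ℝ)^2) * x⁻¹ := by
          funext y; ring
        rw [he]
        have := (hasDerivAt_inv hx0.ne').const_mul (-π * (n:ℝ)^2)
        exact this.congr_deriv (by ring)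
      have := h0.exp
      exact this.congr_deriv (by ring)
    · have hx0 : (0:ℝ) < x := lt_trans (by positivity) hx.1
      rw [Real.norm_eq_abs, abs_of_nonneg (by positivity)]
      have h1 : π / x^2 ≤ π / (a/2)^2 := by
        have hxx : (a/2)^2 ≤ x^2 := by nlinarith [hx.1]
        exact div_le_div_of_nonneg_left hπ.le (by positivity) hxx
      have h2 : Real.exp (-π / x * (n:ℝ)^2) ≤ Real.exp (-π / (2*a) * (n:ℝ)^2) := by
        apply Real.exp_le_exp.2
        have h3 : π / (2*a) ≤ π / x := div_le_div_of_nonneg_left hπ.le hx0 hx.2.le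
        have h4 := mul_le_mul_of_nonneg_right h3 (sq_nonneg ((n:ℝ)))
        have e5 : -π/x*(n:ℝ)^2 = -(π/x*(n:ℝ)^2) := by ring
        have e6 : -π/(2*a)*(n:ℝ)^2 = -(π/(2*a)*(n:ℝ)^2) := by ring
        rw [e5, e6]
        linarith
      have hn2 : (0:ℝ) ≤ (n:ℝ)^2 := sq_nonneg _
      calc π / x^2 * ((n:ℝ)^2 * Real.exp (-π / x * (n:ℝ)^2))
          ≤ π / (a/2)^2 * ((n:ℝ)^2 * Real.exp (-π / x * (n:ℝ)^2)) := by
            apply mul_le_mul_of_nonneg_right h1 (by positivity)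
        _ ≤ π / (a/2)^2 * ((n:ℝ)^2 * Real.exp (-π / (2*a) * (n:ℝ)^2)) := by
            apply mul_le_mul_of_nonneg_left _ (by positivity)
            exact mul_le_mul_of_nonneg_left h2 hn2
  -- RHS function derivative
  have hrpow : HasDerivAt (fun x : ℝ => x ^ (-(1/2) : ℝ))
      ((-(1/2) : ℝ) * a ^ ((-(1/2) : ℝ) - 1)) a :=
    Real.hasDerivAt_rpow_const (Or.inl ha.ne')
  have hR := hrpow.mul hG
  -- eventual equality via Poisson summation
  have hEq : (fun x : ℝ => ∑' n : ℤ, Real.exp (-π * x * (n:ℝ)^2))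
      =ᶠ[nhds a] (fun x : ℝ => x ^ (-(1/2) : ℝ) * ∑' n : ℤ, Real.exp (-π / x * (n:ℝ)^2)) := by
    filter_upwards [Ioi_mem_nhds ha] with x hx
    have := Real.tsum_exp_neg_mul_int_sq (a := x) hx
    rw [this, one_div, ← Real.rpow_neg (le_of_lt hx)]
  have hP2 := (hR.congr_of_eventuallyEq hEq)
  have E := hP.unique hP2
  rw [tsum_neg, tsum_mul_left, tsum_mul_left] at E
  -- now E is the scalar identity; massage with rpow algebra
  set S := ∑' n : ℤ, (n:ℝ)^2 * Real.exp (-π * a * (n:ℝ)^2) with hS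
  set G := ∑' n : ℤ, Real.exp (-π / a * (n:ℝ)^2) with hGdef
  set H := ∑' n : ℤ, (n:ℝ)^2 * Real.exp (-π / a * (n:ℝ)^2) with hH
  have e1 : a ^ ((3:ℝ)/2) * a ^ ((-(1/2) : ℝ) - 1) = 1 := by
    rw [← Real.rpow_add ha]; norm_num
  have e2 : a ^ ((3:ℝ)/2) * a ^ (-(1/2) : ℝ) = a := by
    rw [← Real.rpow_add ha]; norm_num
  have hπ' : (π : ℝ) ≠ 0 := ne_of_gt hπ
  have ha' : a ≠ 0 := ne_of_gt ha
  have E3 : π * (a ^ ((3:ℝ)/2) * S) = G/2 - (π/a) * H := by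
    have := congrArg (fun y => a ^ ((3:ℝ)/2) * y) E
    calc π * (a ^ ((3:ℝ)/2) * S) = -(a ^ ((3:ℝ)/2) * -(π * S)) := by ring
      _ = -(a ^ ((3:ℝ)/2) * (-(1/2) * a ^ ((-(1/2):ℝ) - 1) * G
            + a ^ (-(1/2):ℝ) * (π / a ^ 2 * H))) := by rw [this]
      _ = (1/2) * (a ^ ((3:ℝ)/2) * a ^ ((-(1/2):ℝ) - 1)) * G
            - (a ^ ((3:ℝ)/2) * a ^ (-(1/2):ℝ)) * (π / a^2) * H := by ring
      _ = G/2 - (π/a) * H := by rw [e1, e2]; field_simp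
  have : π * (a ^ ((3:ℝ)/2) * S) = π * (1/(2*π) * G - (1/a) * H) := by
    rw [E3]; field_simp
  exact mul_left_cancel₀ hπ' this

set_option maxHeartbeats 1000000 in
lemma decomp {b : ℝ} (hb : b < 0) :
    ∑' n : ℤ, (n:ℝ)^2 * Real.exp (b*(n:ℝ)^2)
      = 2 * ∑' n : ℕ, ((n:ℝ)+1)^2 * Real.exp (b*((n:ℝ)+1)^2) := by
  have h1 : Summable (fun n : ℕ => ((n:ℤ):ℝ)^2 * Real.exp (b*((n:ℤ):ℝ)^2)) :=
    (sumNat hb).congr (fun n => by push_cast; ring_nf)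
  have h2 : Summable (fun n : ℕ => (((-(n+1):ℤ)):ℝ)^2 * Real.exp (b*(((-(n+1):ℤ)):ℝ)^2)) :=
    (((summable_nat_add_iff 1).2 (sumNat hb))).congr (fun n => by push_cast; ring_nf)
  rw [tsum_of_nat_of_neg_add_one h1 h2]
  have h3 : Summable (fun n : ℕ => ((n:ℝ)+1)^2 * Real.exp (b*((n:ℝ)+1)^2)) :=
    (((summable_nat_add_iff 1).2 (sumNat hb))).congr (fun n => by push_cast; ring_nf)
  have e1 : ∑' n : ℕ, (((n:ℤ)):ℝ)^2 * Real.exp (b*(((n:ℤ)):ℝ)^2)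
      = ∑' n : ℕ, ((n:ℝ)+1)^2 * Real.exp (b*((n:ℝ)+1)^2) := by
    rw [Summable.tsum_eq_zero_add h1]
    simp only [Int.cast_natCast]
    norm_num
  have e2 : ∑' n : ℕ, (((-(n+1):ℤ)):ℝ)^2 * Real.exp (b*(((-(n+1):ℤ)):ℝ)^2)
      = ∑' n : ℕ, ((n:ℝ)+1)^2 * Real.exp (b*((n:ℝ)+1)^2) :=
    tsum_congr (fun n => by push_cast; ring_nf)
  rw [e1, e2]; ring

lemma Glim : Tendsto (fun a : ℝ => ∑' n : ℤ, Real.exp (-π/a*(n:ℝ)^2))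
    (nhdsWithin 0 (Set.Ioi 0)) (nhds 1) := by
  have hπ := Real.pi_pos
  have h := tendsto_tsum_of_dominated_convergence
    (𝓕 := nhdsWithin (0:ℝ) (Set.Ioi 0))
    (f := fun (a : ℝ) (n : ℤ) => Real.exp (-π/a*(n:ℝ)^2))
    (g := fun n : ℤ => if n = 0 then 1 else 0)
    (bound := fun n : ℤ => Real.exp (-π*(n:ℝ)^2))
    (sumIntExp (by linarith))
    ?_ ?_
  · rw [tsum_ite_eq] at h
    exact h
  · intro k
    by_cases hk : k = 0
    · subst hk
      simp only [Int.cast_zero, if_pos rfl]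
      have : ∀ a : ℝ, Real.exp (-π/a*((0:ℤ):ℝ)^2) = 1 := by intro a; norm_num
      simpa [this] using tendsto_const_nhds (α := ℝ)
    · simp only [if_neg hk]
      have hc : (0:ℝ) < π*(k:ℝ)^2 := by
        have : ((k:ℝ)) ≠ 0 := Int.cast_ne_zero.2 hk
        positivity
      have h1 : Tendsto (fun a : ℝ => a⁻¹) (nhdsWithin 0 (Set.Ioi 0)) atTop :=
        tendsto_inv_nhdsGT_zero
      have h2 : Tendsto (fun a : ℝ => π*(k:ℝ)^2 * a⁻¹) (nhdsWithin 0 (Set.Ioi 0)) atTop :=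
        h1.const_mul_atTop hc
      have h3 : Tendsto (fun a : ℝ => Real.exp (-(π*(k:ℝ)^2 * a⁻¹)))
          (nhdsWithin 0 (Set.Ioi 0)) (nhds 0) :=
        Real.tendsto_exp_atBot.comp (tendsto_neg_atTop_atBot.comp h2)
      refine h3.congr (fun a => ?_)
      congr 1; ring
  · filter_upwards [Ioo_mem_nhdsGT_of_mem (by norm_num : (0:ℝ) ∈ Set.Ico 0 1)] with a ha k
    rw [Real.norm_eq_abs, abs_of_pos (Real.exp_pos _)]
    apply Real.exp_le_exp.2
    have h1 : π/1 ≤ π/a := div_le_div_of_nonneg_left hπ.le ha.1 ha.2.le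
    have h2 := mul_le_mul_of_nonneg_right h1 (sq_nonneg ((k:ℝ)))
    have e1 : -π/a*(k:ℝ)^2 = -(π/a*(k:ℝ)^2) := by ring
    have e2 : -π*(k:ℝ)^2 = -(π/1*(k:ℝ)^2) := by ring
    rw [e1, e2]
    linarith

lemma Hlim : Tendsto (fun a : ℝ => (1/a) * ∑' n : ℤ, (n:ℝ)^2 * Real.exp (-π/a*(n:ℝ)^2))
    (nhdsWithin 0 (Set.Ioi 0)) (nhds 0) := by
  have hπ := Real.pi_pos
  have key := tendsto_tsum_of_dominated_convergence
    (𝓕 := nhdsWithin (0:ℝ) (Set.Ioi 0))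
    (f := fun (a : ℝ) (n : ℤ) => (1/a) * ((n:ℝ)^2 * Real.exp (-π/a*(n:ℝ)^2)))
    (g := fun _ : ℤ => (0:ℝ))
    (bound := fun n : ℤ => (1/π) * Real.exp (-π/2*(n:ℝ)^2))
    ((sumIntExp (by linarith : -π/2 < 0)).mul_left (1/π))
    ?_ ?_
  · rw [tsum_zero] at key
    refine key.congr' ?_
    filter_upwards [self_mem_nhdsWithin] with a _
    exact tsum_mul_left
  · intro k
    by_cases hk : k = 0
    · subst hk
      have : ∀ a : ℝ, (1/a) * (((0:ℤ):ℝ)^2 * Real.exp (-π/a*((0:ℤ):ℝ)^2)) = 0 := by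
        intro a; norm_num
      simpa [this] using tendsto_const_nhds (α := ℝ)
    · have hc : (0:ℝ) < π*(k:ℝ)^2 := by
        have : ((k:ℝ)) ≠ 0 := Int.cast_ne_zero.2 hk
        positivity
      have h2 : Tendsto (fun a : ℝ => π*(k:ℝ)^2 * a⁻¹) (nhdsWithin 0 (Set.Ioi 0)) atTop :=
        tendsto_inv_nhdsGT_zero.const_mul_atTop hc
      have L : Tendsto (fun x : ℝ => x * Real.exp (-x)) atTop (nhds 0) := by
        simpa using Real.tendsto_pow_mul_exp_neg_atTop_nhds_zero 1
      have h3 := ((L.comp h2).const_mul (1/π))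
      rw [mul_zero] at h3
      refine h3.congr' ?_
      filter_upwards [self_mem_nhdsWithin] with a ha
      simp only [Function.comp_apply]
      have ea : -π/a*(k:ℝ)^2 = -(π*(k:ℝ)^2*a⁻¹) := by ring
      rw [ea]
      have e7 : 1/π * ((π*(k:ℝ)^2*a⁻¹) * Real.exp (-(π*(k:ℝ)^2*a⁻¹)))
          = (π⁻¹*π) * ((k:ℝ)^2*a⁻¹ * Real.exp (-(π*(k:ℝ)^2*a⁻¹))) := by ring
      rw [e7, inv_mul_cancel₀ (ne_of_gt hπ)]
      ring
  · filter_upwards [Ioo_mem_nhdsGT_of_mem (by norm_num : (0:ℝ) ∈ Set.Ico 0 1)] with a ha k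
    have ha0 : 0 < a := ha.1
    have hxx : 0 ≤ π*(k:ℝ)^2/a := by positivity
    have h1 := aux_xexp hxx
    have eL : (1/a) * ((k:ℝ)^2 * Real.exp (-π/a*(k:ℝ)^2))
        = (1/π) * ((π*(k:ℝ)^2/a) * Real.exp (-(π*(k:ℝ)^2/a))) := by
      have ea : -π/a*(k:ℝ)^2 = -(π*(k:ℝ)^2/a) := by ring
      rw [ea]
      have e7 : 1/π * ((π*(k:ℝ)^2/a) * Real.exp (-(π*(k:ℝ)^2/a)))
          = (π⁻¹*π) * ((k:ℝ)^2/a * Real.exp (-(π*(k:ℝ)^2/a))) := by ring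
      rw [e7, inv_mul_cancel₀ (ne_of_gt hπ)]
      ring
    rw [Real.norm_eq_abs, abs_of_nonneg (by positivity), eL]
    have h2 : Real.exp (-(π*(k:ℝ)^2/a)/2) ≤ Real.exp (-π/2*(k:ℝ)^2) := by
      apply Real.exp_le_exp.2
      have h3 : π*(k:ℝ)^2/1 ≤ π*(k:ℝ)^2/a :=
        div_le_div_of_nonneg_left (by positivity) ha0 ha.2.le
      rw [div_one] at h3
      linarith
    calc (1/π) * ((π*(k:ℝ)^2/a) * Real.exp (-(π*(k:ℝ)^2/a)))
        ≤ (1/π) * Real.exp (-(π*(k:ℝ)^2/a)/2) := by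
          apply mul_le_mul_of_nonneg_left h1 (by positivity)
      _ ≤ (1/π) * Real.exp (-π/2*(k:ℝ)^2) := by
          apply mul_le_mul_of_nonneg_left h2 (by positivity)


/-- The `SU(2)` heat kernel at the identity satisfies the small-time asymptotics
`K_α(1) ∼ √(4π) α^{-3/2}` as `α → 0⁺`, i.e.
`α^{3/2} · e^{α/4} · ∑_{n ≥ 1} n² e^{-α n²/4} → √(4π)`. -/
theorem stmt6 :
    Tendsto
      (fun α : ℝ =>
        α ^ ((3 : ℝ) / 2) *
          (Real.exp (α / 4) *
            ∑' n : ℕ, ((n : ℝ) + 1) ^ 2 * Real.exp (-α * ((n : ℝ) + 1) ^ 2 / 4)))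
      (nhdsWithin 0 (Set.Ioi 0)) (nhds (Real.sqrt (4 * Real.pi))) := by
  have hπ := Real.pi_pos
  have hπ' : (π:ℝ) ≠ 0 := ne_of_gt hπ
  have hS : Tendsto (fun a : ℝ => a ^ ((3:ℝ)/2) * ∑' n : ℤ, (n:ℝ)^2 * Real.exp (-π*a*(n:ℝ)^2))
      (nhdsWithin 0 (Set.Ioi 0)) (nhds (1/(2*π))) := by
    have h := (Glim.const_mul (1/(2*π))).sub Hlim
    rw [mul_one, sub_zero] at h
    refine h.congr' ?_
    filter_upwards [self_mem_nhdsWithin] with a ha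
    exact (keyId ha).symm
  have hcomp : Tendsto (fun α : ℝ => α/(4*π)) (nhdsWithin 0 (Set.Ioi 0))
      (nhdsWithin 0 (Set.Ioi 0)) := by
    apply tendsto_nhdsWithin_of_tendsto_nhds_of_eventually_within
    · have h1 : Tendsto (fun α : ℝ => α/(4*π)) (nhds 0) (nhds (0/(4*π))) :=
        (continuous_id.div_const _).tendsto 0
      rw [zero_div] at h1
      exact h1.mono_left nhdsWithin_le_nhds
    · filter_upwards [self_mem_nhdsWithin] with α hα
      exact Set.mem_Ioi.2 (div_pos hα (by positivity))
  have hexp : Tendsto (fun α : ℝ => Real.exp (α/4)) (nhdsWithin 0 (Set.Ioi 0)) (nhds 1) := by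
    have h1 : Tendsto (fun α : ℝ => Real.exp (α/4)) (nhds 0) (nhds (Real.exp (0/4))) :=
      (Real.continuous_exp.comp (continuous_id.div_const 4)).tendsto 0
    norm_num at h1
    exact h1.mono_left nhdsWithin_le_nhds
  have main := (hexp.mul (hS.comp hcomp)).const_mul ((4*π) ^ ((3:ℝ)/2)/2)
  have hval : (4*π) ^ ((3:ℝ)/2)/2 * (1 * (1/(2*π))) = Real.sqrt (4*π) := by
    rw [Real.sqrt_eq_rpow, show ((3:ℝ)/2) = 1/2 + 1 by norm_num,
      Real.rpow_add (by positivity), Real.rpow_one]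
    field_simp
    ring
  rw [← hval]
  refine main.congr' ?_
  filter_upwards [self_mem_nhdsWithin] with α hα
  simp only [Function.comp_apply]
  have ha : (0:ℝ) < α/(4*π) := div_pos hα (by positivity)
  have hT : (∑' n : ℕ, ((n:ℝ)+1)^2 * Real.exp (-α * ((n:ℝ)+1)^2 / 4))
      = ∑' n : ℕ, ((n:ℝ)+1)^2 * Real.exp (-π*(α/(4*π))*((n:ℝ)+1)^2) := by
    refine tsum_congr (fun n => ?_)
    congr 1
    rw [show -π*(α/(4*π))*((n:ℝ)+1)^2 = -α * ((n:ℝ)+1)^2 / 4 by field_simp]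
  have hdec : ∑' n : ℤ, (n:ℝ)^2 * Real.exp (-π*(α/(4*π))*(n:ℝ)^2)
      = 2 * ∑' n : ℕ, ((n:ℝ)+1)^2 * Real.exp (-π*(α/(4*π))*((n:ℝ)+1)^2) :=
    decomp (by nlinarith : -π*(α/(4*π)) < 0)
  have hα32 : α ^ ((3:ℝ)/2) = (4*π) ^ ((3:ℝ)/2) * (α/(4*π)) ^ ((3:ℝ)/2) := by
    rw [← Real.mul_rpow (by positivity) (le_of_lt ha)]
    congr 1
    field_simp
  rw [hT, hdec, hα32]
  ring
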